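/- Let φ_1, …, φ_Ñ and ψ be unit vectors in ℋ with φ_k ∈ L_k for each k. Then ∑_{k=1}^{Ñ} ‖φ_k − ψ‖² ≥ 2Ñ − 2√Ñ. -/

import Mathlib

open scoped BigOperators
noncomputable section

/-- if `φ_k ∈ L_k` are unit vectors and `ψ` is a unit vector, then
`∑_k ‖φ_k − ψ‖² ≥ 2Ñ − 2√Ñ`. -/
theorem lower_bound_sum_dist_sq
    (Nt ℓ : ℕ) (hNt : 1 ≤ Nt) (hℓ : 1 ≤ ℓ)
    (w : Fin Nt × Fin ℓ → EuclideanSpace ℂ (Fin (Nt * ℓ)))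
    (hw : Orthonormal ℂ w)
    (hspan : Submodule.span ℂ (Set.range w) = ⊤)
    (L : Fin Nt → Submodule ℂ (EuclideanSpace ℂ (Fin (Nt * ℓ))))
    (hL : ∀ k, L k = Submodule.span ℂ (Set.range fun i : Fin ℓ => w (k, i)))
    (φ : Fin Nt → EuclideanSpace ℂ (Fin (Nt * ℓ)))
    (ψ : EuclideanSpace ℂ (Fin (Nt * ℓ)))
    (hφ1 : ∀ k, ‖φ k‖ = 1) (hψ1 : ‖ψ‖ = 1)
    (hφL : ∀ k, φ k ∈ L k) :
    2 * (Nt : ℝ) - 2 * Real.sqrt Nt ≤ ∑ k : Fin Nt, ‖φ k - ψ‖ ^ 2 := by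
  -- orthogonality of the blocks
  have hortho : ∀ j k : Fin Nt, j ≠ k → (inner ℂ (φ j) (φ k) : ℂ) = 0 := by
    intro j k hjk
    have hLo : L j ⟂ L k := by
      rw [hL j, hL k, Submodule.isOrtho_span]
      rintro u ⟨i, rfl⟩ v ⟨i', rfl⟩
      exact hw.2 (by simp [Prod.ext_iff, hjk])
    exact hLo.inner_eq (hφL j) (hφL k)
  have hφon : Orthonormal ℂ φ := by
    rw [orthonormal_iff_ite]
    intro j k
    by_cases h : j = k
    · subst h; simp [inner_self_eq_norm_sq_to_K, hφ1 j]
    · simp [h, hortho j k h]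
  -- Bessel
  have hbessel : ∑ k : Fin Nt, ‖(inner ℂ (φ k) ψ : ℂ)‖ ^ 2 ≤ 1 := by
    have := hφon.sum_inner_products_le (s := Finset.univ) ψ
    simpa [hψ1] using this
  -- sum of Re inner ≤ sqrt Nt
  have hkey : ∑ k : Fin Nt, (Complex.re (inner ℂ (φ k) ψ)) ≤ Real.sqrt Nt := by
    have h1 : ∑ k : Fin Nt, (Complex.re (inner ℂ (φ k) ψ)) ≤
        ∑ k : Fin Nt, ‖(inner ℂ (φ k) ψ : ℂ)‖ := by
      refine Finset.sum_le_sum fun k _ => ?_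
      calc Complex.re (inner ℂ (φ k) ψ) ≤ |Complex.re (inner ℂ (φ k) ψ)| := le_abs_self _
        _ ≤ ‖(inner ℂ (φ k) ψ : ℂ)‖ := by
            simpa using Complex.abs_re_le_norm (inner ℂ (φ k) ψ)
    have h2 : (∑ k : Fin Nt, ‖(inner ℂ (φ k) ψ : ℂ)‖) ^ 2 ≤
        (Nt : ℝ) * ∑ k : Fin Nt, ‖(inner ℂ (φ k) ψ : ℂ)‖ ^ 2 := by
      simpa using sq_sum_le_card_mul_sum_sq (s := (Finset.univ : Finset (Fin Nt)))
        (f := fun k => ‖(inner ℂ (φ k) ψ : ℂ)‖)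
    have h3 : (∑ k : Fin Nt, ‖(inner ℂ (φ k) ψ : ℂ)‖) ^ 2 ≤ (Nt : ℝ) := by
      calc _ ≤ (Nt : ℝ) * ∑ k : Fin Nt, ‖(inner ℂ (φ k) ψ : ℂ)‖ ^ 2 := h2
        _ ≤ (Nt : ℝ) * 1 := by
            exact mul_le_mul_of_nonneg_left hbessel (Nat.cast_nonneg _)
        _ = (Nt : ℝ) := mul_one _
    have h4 : ∑ k : Fin Nt, ‖(inner ℂ (φ k) ψ : ℂ)‖ ≤ Real.sqrt Nt := by
      have hnn : 0 ≤ ∑ k : Fin Nt, ‖(inner ℂ (φ k) ψ : ℂ)‖ :=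
        Finset.sum_nonneg fun _ _ => norm_nonneg _
      nlinarith [Real.sq_sqrt (Nat.cast_nonneg Nt : (0:ℝ) ≤ Nt),
        Real.sqrt_nonneg (Nt : ℝ)]
    exact h1.trans h4
  have hexp : ∀ k : Fin Nt, ‖φ k - ψ‖ ^ 2 = 2 - 2 * Complex.re (inner ℂ (φ k) ψ) := by
    intro k
    have := @norm_sub_sq ℂ _ _ _ _ (φ k) ψ
    rw [this, hφ1 k, hψ1]
    ring_nf
    rfl
  calc 2 * (Nt : ℝ) - 2 * Real.sqrt Nt
      ≤ 2 * (Nt : ℝ) - 2 * ∑ k : Fin Nt, (Complex.re (inner ℂ (φ k) ψ)) := by linarith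
    _ = ∑ k : Fin Nt, (2 - 2 * Complex.re (inner ℂ (φ k) ψ)) := by
        rw [Finset.sum_sub_distrib, Finset.mul_sum]
        simp [Finset.card_univ, mul_comm]
    _ = ∑ k : Fin Nt, ‖φ k - ψ‖ ^ 2 := by
        exact Finset.sum_congr rfl fun k _ => (hexp k).symm
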